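/- Reduction of a slanted gate to a vertical gate: let α < β and let AB be a segment from A = (x₁, y₁) to B = (x₂, y₂) with x₁ < x₂. Any trajectory with slopes in [α, β] that starts at or to the left of x₁ and intersects segment AB must also cross the vertical segment at x₂ of length τ_{α,β}((y₂-y₁)/(x₂-x₁))·(x₂-x₁), where τ_{α,β}(s) = s - α if s ≥ β, τ_{α,β}(s) = β - α if α ≤ s ≤ β, and τ_{α,β}(s) = β - s if s ≤ α, the vertical segment being appropriately placed at the endpoint of AB. -/

import Mathlib

open Set

/-- A trajectory from `(x, y)` with all slopes in `[α, β]`. -/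
def IsTraj (α β x y : ℝ) (f : ℝ → ℝ) : Prop :=
  f x = y ∧ ∀ t s : ℝ, x ≤ t → t ≤ s →
    α * (s - t) ≤ f s - f t ∧ f s - f t ≤ β * (s - t)

/-- The function `τ_{α,β}` : `s - α` for `s ≥ β`, `β - α` for `α ≤ s ≤ β`, `β - s` for `s ≤ α`. -/
noncomputable def tau (α β s : ℝ) : ℝ :=
  if β ≤ s then s - α else if s ≤ α then β - s else β - α

/-- Reduction of a slanted gate to a vertical gate: a trajectory with slopes in `[α, β]`
starting at or to the left of `x₁` that intersects the segment from `(x₁, y₁)` to `(x₂, y₂)`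
must cross the vertical segment at `x₂` (appropriately placed at an endpoint of the segment)
of length `τ_{α,β}((y₂-y₁)/(x₂-x₁)) · (x₂-x₁)`. -/
theorem slanted_gate_to_vertical (α β x y x₁ y₁ x₂ y₂ : ℝ) (hαβ : α < β) (h12 : x₁ < x₂)
    (hx : x ≤ x₁) (f : ℝ → ℝ) (hf : IsTraj α β x y f)
    (hit : ∃ u ∈ Icc x₁ x₂, f u = y₁ + (y₂ - y₁) / (x₂ - x₁) * (u - x₁)) :
    f x₂ ∈ Icc (if (y₂ - y₁) / (x₂ - x₁) ≤ α then y₂ else y₁ + α * (x₂ - x₁))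
               (if β ≤ (y₂ - y₁) / (x₂ - x₁) then y₂ else y₁ + β * (x₂ - x₁)) ∧
    (if β ≤ (y₂ - y₁) / (x₂ - x₁) then y₂ else y₁ + β * (x₂ - x₁)) -
      (if (y₂ - y₁) / (x₂ - x₁) ≤ α then y₂ else y₁ + α * (x₂ - x₁))
      = tau α β ((y₂ - y₁) / (x₂ - x₁)) * (x₂ - x₁) := by
  obtain ⟨u, ⟨hu1, hu2⟩, hfu⟩ := hit
  set s := (y₂ - y₁) / (x₂ - x₁) with hs
  have hne : x₂ - x₁ ≠ 0 := by linarith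
  have hy2 : y₂ = y₁ + s * (x₂ - x₁) := by
    rw [hs, div_mul_cancel₀ _ hne]; ring
  obtain ⟨hlo, hhi⟩ := (hf.2 u x₂ (le_trans hx hu1) hu2)
  rw [hfu] at hlo hhi
  constructor
  · constructor
    · split_ifs with h
      · nlinarith
      · nlinarith
    · split_ifs with h
      · nlinarith
      · nlinarith
  · unfold tau
    split_ifs <;> nlinarith
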